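/- Let (K, δ) be a differential field with field of constants C, and let (M, d_M) and (N, d_N) be finite-dimensional differential modules over (K, δ). Let M^Δ, N^Δ denote the C-vector spaces of horizontal dual vectors, and equip M ⊗_K N with the differential module structure d determined by d(a ⊗ b) = d_M(a) ⊗ b + a ⊗ d_N(b). Assume that dim_C M^Δ = dim_K M and dim_C N^Δ = dim_K N (as holds when K is differentially closed). Then the C-linear map M^Δ ⊗_C N^Δ → (M ⊗_K N)^Δ induced by (v, w) ↦ φ(v, w), where φ(v, w)(a ⊗ b) = v(a)·w(b), is a C-linear isomorphism; in particular, the C-linear span of {φ(v, w) : v ∈ M^Δ, w ∈ N^Δ} equals (M ⊗_K N)^Δ. -/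

import Mathlib

open TensorProduct

/-- The field of constants `C = {r ∈ K : δ r = 0}` of a differential field `(K, δ)`. -/
def constants {K : Type*} [Field K] (δ : K → K)
    (hadd : ∀ a b, δ (a + b) = δ a + δ b)
    (hmul : ∀ a b, δ (a * b) = a * δ b + b * δ a) : Subfield K where
  carrier := {r | δ r = 0}
  zero_mem' := by
    have h := hadd 0 0
    rw [add_zero] at h
    exact (left_eq_add.mp h)
  one_mem' := by
    have h := hmul 1 1
    rw [mul_one, one_mul] at h
    exact (left_eq_add.mp h)
  add_mem' := by
    intro a b ha hb
    simp only [Set.mem_setOf_eq] at *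
    rw [hadd, ha, hb, add_zero]
  neg_mem' := by
    intro a ha
    simp only [Set.mem_setOf_eq] at *
    have h0 : δ 0 = 0 := by
      have h := hadd 0 0; rw [add_zero] at h; exact (left_eq_add.mp h)
    have h := hadd a (-a)
    rw [add_neg_cancel, h0, ha, zero_add] at h
    exact h.symm
  mul_mem' := by
    intro a b ha hb
    simp only [Set.mem_setOf_eq] at *
    rw [hmul, ha, hb, mul_zero, mul_zero, add_zero]
  inv_mem' := by
    intro a ha
    simp only [Set.mem_setOf_eq] at *
    rcases eq_or_ne a 0 with rfl | hne
    · rw [inv_zero]; exact ha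
    · have h0 : δ 1 = 0 := by
        have h := hmul 1 1; rw [mul_one, one_mul] at h; exact (left_eq_add.mp h)
      have h := hmul a a⁻¹
      rw [mul_inv_cancel₀ hne, h0, ha, mul_zero, add_zero] at h
      rcases mul_eq_zero.mp h.symm with h' | h'
      · exact absurd h' hne
      · exact h'

/-- The `C`-vector space `M^Δ` of horizontal dual vectors of a differential module
`(M, d)`: those `K`-linear functionals `v : M → K` with `Dv = 0`, i.e.
`δ (v a) = v (d a)` for all `a`. -/
def horizontalDual {K M : Type*} [Field K] [AddCommGroup M] [Module K M]
    (δ : K → K)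
    (hδadd : ∀ a b : K, δ (a + b) = δ a + δ b)
    (hδmul : ∀ a b : K, δ (a * b) = a * δ b + b * δ a)
    (d : M → M) : Submodule (constants δ hδadd hδmul) (M →ₗ[K] K) where
  carrier := {v | ∀ a : M, δ (v a) = v (d a)}
  zero_mem' := by
    intro a
    have h := hδadd 0 0
    rw [add_zero] at h
    simp [left_eq_add.mp h]
  add_mem' := by
    intro v w hv hw a
    simp only [Set.mem_setOf_eq] at *
    rw [LinearMap.add_apply, LinearMap.add_apply, hδadd, hv, hw]
  smul_mem' := by
    intro c v hv a
    simp only [Set.mem_setOf_eq] at *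
    have hc : δ (c : K) = 0 := c.2
    rw [Subring.smul_def, LinearMap.smul_apply, LinearMap.smul_apply,
      smul_eq_mul, smul_eq_mul, hδmul, hc, mul_zero, add_zero, hv]


open Module

section Aux

theorem delta_zero {K : Type*} [Field K] (δ : K → K)
    (hδadd : ∀ a b : K, δ (a + b) = δ a + δ b) : δ 0 = 0 := by
  have h := hδadd 0 0
  rw [add_zero] at h
  exact (left_eq_add.mp h)

theorem delta_one {K : Type*} [Field K] (δ : K → K)
    (hδmul : ∀ a b : K, δ (a * b) = a * δ b + b * δ a) : δ 1 = 0 := by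
  have h := hδmul 1 1
  rw [mul_one, one_mul] at h
  exact (left_eq_add.mp h)

theorem delta_sum {K : Type*} [Field K] (δ : K → K)
    (hδadd : ∀ a b : K, δ (a + b) = δ a + δ b)
    {ι : Type*} (s : Finset ι) (h : ι → K) :
    δ (∑ i ∈ s, h i) = ∑ i ∈ s, δ (h i) := by
  classical
  induction s using Finset.cons_induction with
  | empty => simpa using delta_zero δ hδadd
  | cons a s ha ih => rw [Finset.sum_cons, Finset.sum_cons, hδadd, ih]

/-- Horizontal functionals that are `C`-linearly independent are `K`-linearly independent. -/
theorem horiz_linearIndependent {K M : Type*} [Field K] [AddCommGroup M] [Module K M]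
    (δ : K → K)
    (hδadd : ∀ a b : K, δ (a + b) = δ a + δ b)
    (hδmul : ∀ a b : K, δ (a * b) = a * δ b + b * δ a)
    {ι : Type*} (d : M → M) (u : ι → (M →ₗ[K] K))
    (hu : ∀ i, u i ∈ horizontalDual δ hδadd hδmul d)
    (hind : LinearIndependent (constants δ hδadd hδmul) u) :
    LinearIndependent K u := by
  classical
  rw [linearIndependent_iff']
  suffices H : ∀ n : ℕ, ∀ s : Finset ι, s.card = n → ∀ g : ι → K,
      ∑ i ∈ s, g i • u i = 0 → ∀ i ∈ s, g i = 0 by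
    exact fun s g hg i hi => H s.card s rfl g hg i hi
  intro n
  induction n using Nat.strong_induction_on with
  | _ n IH =>
  intro s hs g hsum i hi
  by_contra hgi
  obtain ⟨g', hg'⟩ : ∃ g' : ι → K, g' = fun j => (g i)⁻¹ * g j := ⟨_, rfl⟩
  have hg'sum : ∑ j ∈ s, g' j • u j = 0 := by
    have h1 : ∑ j ∈ s, g' j • u j = (g i)⁻¹ • ∑ j ∈ s, g j • u j := by
      rw [Finset.smul_sum]
      exact Finset.sum_congr rfl fun j _ => by rw [hg', smul_smul]
    rw [h1, hsum, smul_zero]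
  have key : ∀ a : M, ∑ j ∈ s, g' j * (u j) a = 0 := by
    intro a
    have := LinearMap.congr_fun hg'sum a
    simpa using this
  have hδsum : ∑ j ∈ s, δ (g' j) • u j = 0 := by
    apply LinearMap.ext
    intro a
    have h2 := congrArg δ (key a)
    rw [delta_sum δ hδadd, delta_zero δ hδadd] at h2
    have h2' : ∑ j ∈ s, (g' j * δ ((u j) a) + (u j) a * δ (g' j)) = 0 := by
      rw [← h2]
      exact Finset.sum_congr rfl fun j _ => (hδmul _ _).symm
    rw [Finset.sum_add_distrib] at h2'
    have h3 : ∑ j ∈ s, g' j * δ ((u j) a) = 0 := by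
      have e : ∑ j ∈ s, g' j * δ ((u j) a) = ∑ j ∈ s, g' j * (u j) (d a) :=
        Finset.sum_congr rfl fun j _ => by rw [hu j a]
      rw [e, key (d a)]
    rw [h3, zero_add] at h2'
    simp only [LinearMap.sum_apply, LinearMap.smul_apply, smul_eq_mul, LinearMap.zero_apply]
    rw [← h2']
    exact Finset.sum_congr rfl fun j _ => mul_comm _ _
  have hg'i : g' i = 1 := by rw [hg']; exact inv_mul_cancel₀ hgi
  have hδi : δ (g' i) = 0 := by rw [hg'i, delta_one δ hδmul]
  have hall : ∀ j ∈ s, δ (g' j) = 0 := by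
    have hrest : ∀ j ∈ s.erase i, δ (g' j) = 0 := by
      refine IH (s.erase i).card ?_ (s.erase i) rfl (fun j => δ (g' j)) ?_
      · rw [← hs]; exact Finset.card_erase_lt_of_mem hi
      · rw [Finset.sum_erase_eq_sub hi, hδsum]
        simp [hδi]
    intro j hj
    rcases eq_or_ne j i with rfl | hne
    · exact hδi
    · exact hrest j (Finset.mem_erase.mpr ⟨hne, hj⟩)
  obtain ⟨c, hc⟩ : ∃ c : ι → constants δ hδadd hδmul,
      c = fun j => if hj : j ∈ s then (⟨g' j, hall j hj⟩ : constants δ hδadd hδmul) else 0 :=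
    ⟨_, rfl⟩
  have hcsum : ∑ j ∈ s, c j • u j = 0 := by
    rw [← hg'sum]
    refine Finset.sum_congr rfl fun j hj => ?_
    rw [hc]
    simp only [dif_pos hj]
    rw [Subring.smul_def]
  have hci := linearIndependent_iff'.mp hind s c hcsum i hi
  have : g' i = 0 := by
    have h := congrArg Subtype.val hci
    rw [hc] at h
    simpa [dif_pos hi] using h
  rw [hg'i] at this
  exact one_ne_zero this

/-- The product functional on the tensor product. -/
noncomputable def phi {K M N : Type*} [Field K] [AddCommGroup M] [Module K M]
    [AddCommGroup N] [Module K N] (v : M →ₗ[K] K) (w : N →ₗ[K] K) :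
    (M ⊗[K] N) →ₗ[K] K :=
  (TensorProduct.lid K K).toLinearMap ∘ₗ TensorProduct.map v w

theorem phi_tmul {K M N : Type*} [Field K] [AddCommGroup M] [Module K M]
    [AddCommGroup N] [Module K N] (v : M →ₗ[K] K) (w : N →ₗ[K] K) (a : M) (b : N) :
    phi v w (a ⊗ₜ[K] b) = v a * w b := by
  simp [phi, smul_eq_mul]

theorem phi_eq_dualDistrib {K M N : Type*} [Field K] [AddCommGroup M] [Module K M]
    [AddCommGroup N] [Module K N] (v : M →ₗ[K] K) (w : N →ₗ[K] K) :
    phi v w = TensorProduct.dualDistrib K M N (v ⊗ₜ[K] w) := by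
  apply TensorProduct.ext'
  intro a b
  rw [phi_tmul, TensorProduct.dualDistrib_apply]

theorem phi_mem {K M N : Type*} [Field K] [AddCommGroup M] [Module K M]
    [AddCommGroup N] [Module K N]
    (δ : K → K)
    (hδadd : ∀ a b : K, δ (a + b) = δ a + δ b)
    (hδmul : ∀ a b : K, δ (a * b) = a * δ b + b * δ a)
    (dM : M → M) (dN : N → N) (d : M ⊗[K] N → M ⊗[K] N)
    (hdadd : ∀ s t : M ⊗[K] N, d (s + t) = d s + d t)
    (hdtmul : ∀ (a : M) (b : N), d (a ⊗ₜ[K] b) = dM a ⊗ₜ[K] b + a ⊗ₜ[K] dN b)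
    (v : M →ₗ[K] K) (w : N →ₗ[K] K)
    (hv : v ∈ horizontalDual δ hδadd hδmul dM)
    (hw : w ∈ horizontalDual δ hδadd hδmul dN) :
    phi v w ∈ horizontalDual δ hδadd hδmul d := by
  have hd0 : d 0 = 0 := by
    have h := hdadd 0 0
    rw [add_zero] at h
    exact (left_eq_add.mp h)
  intro t
  induction t using TensorProduct.induction_on with
  | zero => rw [hd0, map_zero, delta_zero δ hδadd]
  | tmul a b =>
    rw [phi_tmul, hδmul, hdtmul, map_add, phi_tmul, phi_tmul, hv a, hw b]
    ring
  | add s t hs ht =>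
    rw [hdadd, map_add, map_add, hδadd, hs, ht]

end Aux


set_option maxHeartbeats 2000000
set_option synthInstance.maxHeartbeats 1000000

theorem horiz_finiteDimensional {K P : Type*} [Field K] [AddCommGroup P] [Module K P]
    [FiniteDimensional K P]
    (δ : K → K)
    (hδadd : ∀ a b : K, δ (a + b) = δ a + δ b)
    (hδmul : ∀ a b : K, δ (a * b) = a * δ b + b * δ a)
    (dP : P → P) :
    FiniteDimensional (constants δ hδadd hδmul) (horizontalDual δ hδadd hδmul dP) := by
  refine (IsNoetherian.iff_fg (K := constants δ hδadd hδmul) (V := horizontalDual δ hδadd hδmul dP)).1 ?_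
  refine (IsNoetherian.iff_rank_lt_aleph0 (K := constants δ hδadd hδmul) (V := horizontalDual δ hδadd hδmul dP)).2 ?_
  refine lt_of_le_of_lt (rank_le (n := Module.finrank K (P →ₗ[K] K)) ?_)
    (Cardinal.nat_lt_aleph0 _)
  intro t ht
  have h1 : LinearIndependent (constants δ hδadd hδmul)
      (fun i : t => ((i : horizontalDual δ hδadd hδmul dP) : P →ₗ[K] K)) :=
    ht.map' (horizontalDual δ hδadd hδmul dP).subtype (Submodule.ker_subtype _)
  have h2 := horiz_linearIndependent δ hδadd hδmul dP _
    (fun i : t => ((i : horizontalDual δ hδadd hδmul dP)).2) h1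
  simpa using h2.fintype_card_le_finrank

set_option maxHeartbeats 2000000
set_option synthInstance.maxHeartbeats 1000000

/-- Let `(K, δ)` be a differential field with field of constants `C`, and
let `(M, d_M)` and `(N, d_N)` be finite-dimensional differential modules over `(K, δ)`.
Let `M^Δ, N^Δ` denote the `C`-vector spaces of horizontal dual vectors, and equip
`M ⊗[K] N` with the differential module structure `d` determined by
`d (a ⊗ b) = d_M a ⊗ b + a ⊗ d_N b`. Assume `dim_C M^Δ = dim_K M` and
`dim_C N^Δ = dim_K N` (as holds when `K` is differentially closed). Then the `C`-linear
map `M^Δ ⊗[C] N^Δ → (M ⊗[K] N)^Δ` induced by `(v, w) ↦ φ(v, w)`, where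
`φ(v, w)(a ⊗ b) = v a * w b`, is a `C`-linear isomorphism; in particular, the `C`-linear
span of `{φ(v, w) : v ∈ M^Δ, w ∈ N^Δ}` equals `(M ⊗[K] N)^Δ`. -/
theorem horizontalDual_tensor_map_bijective
    {K M N : Type*} [Field K] [CharZero K]
    [AddCommGroup M] [Module K M] [FiniteDimensional K M]
    [AddCommGroup N] [Module K N] [FiniteDimensional K N]
    (δ : K → K)
    (hδadd : ∀ a b : K, δ (a + b) = δ a + δ b)
    (hδmul : ∀ a b : K, δ (a * b) = a * δ b + b * δ a)
    (dM : M → M)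
    (hdMadd : ∀ a b : M, dM (a + b) = dM a + dM b)
    (hdMsmul : ∀ (r : K) (a : M), dM (r • a) = δ r • a + r • dM a)
    (dN : N → N)
    (hdNadd : ∀ a b : N, dN (a + b) = dN a + dN b)
    (hdNsmul : ∀ (r : K) (b : N), dN (r • b) = δ r • b + r • dN b)
    (d : M ⊗[K] N → M ⊗[K] N)
    (hdadd : ∀ s t : M ⊗[K] N, d (s + t) = d s + d t)
    (hdtmul : ∀ (a : M) (b : N), d (a ⊗ₜ[K] b) = dM a ⊗ₜ[K] b + a ⊗ₜ[K] dN b)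
    (hdimM : Module.finrank (constants δ hδadd hδmul) (horizontalDual δ hδadd hδmul dM)
      = Module.finrank K M)
    (hdimN : Module.finrank (constants δ hδadd hδmul) (horizontalDual δ hδadd hδmul dN)
      = Module.finrank K N) :
    (∃ Φ : (horizontalDual δ hδadd hδmul dM) ⊗[constants δ hδadd hδmul]
             (horizontalDual δ hδadd hδmul dN) →ₗ[constants δ hδadd hδmul]
           (horizontalDual δ hδadd hδmul d),
      (∀ (v : horizontalDual δ hδadd hδmul dM) (w : horizontalDual δ hδadd hδmul dN)
         (a : M) (b : N),
        (Φ (v ⊗ₜ w) : M ⊗[K] N →ₗ[K] K) (a ⊗ₜ[K] b)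
          = (v : M →ₗ[K] K) a * (w : N →ₗ[K] K) b) ∧
      Function.Bijective Φ) ∧
    Submodule.span (constants δ hδadd hδmul)
      {f : M ⊗[K] N →ₗ[K] K |
        ∃ v ∈ horizontalDual δ hδadd hδmul dM, ∃ w ∈ horizontalDual δ hδadd hδmul dN,
          ∀ (a : M) (b : N), f (a ⊗ₜ[K] b) = v a * w b}
      = horizontalDual δ hδadd hδmul d := by
  classical
  haveI hfdM := horiz_finiteDimensional δ hδadd hδmul dM
  haveI hfdN := horiz_finiteDimensional δ hδadd hδmul dN
  haveI := Module.Free.of_divisionRing (constants δ hδadd hδmul) (horizontalDual δ hδadd hδmul dM)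
  haveI := Module.Free.of_divisionRing (constants δ hδadd hδmul) (horizontalDual δ hδadd hδmul dN)
  -- C-bases of the horizontal duals
  let bv : Basis (Fin (finrank K M)) (constants δ hδadd hδmul)
      (horizontalDual δ hδadd hδmul dM) :=
    Module.finBasisOfFinrankEq _ _ hdimM
  let bw : Basis (Fin (finrank K N)) (constants δ hδadd hδmul)
      (horizontalDual δ hδadd hδmul dN) :=
    Module.finBasisOfFinrankEq _ _ hdimN
  have hbvC : LinearIndependent (constants δ hδadd hδmul)
      (fun i => ((bv i) : M →ₗ[K] K)) :=
    bv.linearIndependent.map_injOn (Submodule.subtype _) (fun x _ y _ h => Subtype.ext h)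
  have hbwC : LinearIndependent (constants δ hδadd hδmul)
      (fun i => ((bw i) : N →ₗ[K] K)) :=
    bw.linearIndependent.map_injOn (Submodule.subtype _) (fun x _ y _ h => Subtype.ext h)
  have hbvK : LinearIndependent K (fun i => ((bv i) : M →ₗ[K] K)) :=
    horiz_linearIndependent δ hδadd hδmul dM _ (fun i => (bv i).2) hbvC
  have hbwK : LinearIndependent K (fun i => ((bw i) : N →ₗ[K] K)) :=
    horiz_linearIndependent δ hδadd hδmul dN _ (fun i => (bw i).2) hbwC
  -- they are K-bases of the duals
  have cardM : Fintype.card (Fin (finrank K M)) = finrank K (M →ₗ[K] K) := by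
    rw [Fintype.card_fin]
    exact (Subspace.dual_finrank_eq (K := K) (V := M)).symm
  have cardN : Fintype.card (Fin (finrank K N)) = finrank K (N →ₗ[K] K) := by
    rw [Fintype.card_fin]
    exact (Subspace.dual_finrank_eq (K := K) (V := N)).symm
  let uB : Basis (Fin (finrank K M)) K (M →ₗ[K] K) :=
    Basis.mk hbvK (hbvK.span_eq_top_of_card_eq_finrank' cardM).ge
  let wB : Basis (Fin (finrank K N)) K (N →ₗ[K] K) :=
    Basis.mk hbwK (hbwK.span_eq_top_of_card_eq_finrank' cardN).ge
  -- the induced K-basis of the dual of the tensor product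
  let eD := TensorProduct.dualDistribEquivOfBasis (Module.finBasis K M) (Module.finBasis K N)
  let B : Basis (Fin (finrank K M) × Fin (finrank K N)) K ((M ⊗[K] N) →ₗ[K] K) :=
    (uB.tensorProduct wB).map eD
  have hB : ∀ p, B p = phi ((bv p.1 : M →ₗ[K] K)) ((bw p.2 : N →ₗ[K] K)) := by
    intro p
    show eD ((uB.tensorProduct wB) p) = _
    rw [Basis.tensorProduct_apply']
    have huB : uB p.1 = ((bv p.1 : M →ₗ[K] K)) := Basis.mk_apply _ _ _
    have hwB : wB p.2 = ((bw p.2 : N →ₗ[K] K)) := Basis.mk_apply _ _ _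
    rw [huB, hwB]
    apply TensorProduct.ext'
    intro a b
    rw [phi_tmul]
    simp [eD, TensorProduct.dualDistribEquivOfBasis_apply_apply]
  have hBmem : ∀ p, B p ∈ horizontalDual δ hδadd hδmul d := by
    intro p
    rw [hB]
    exact phi_mem δ hδadd hδmul dM dN d hdadd hdtmul _ _ (bv p.1).2 (bw p.2).2
  -- the bilinear map and Φ
  let Φbil : (horizontalDual δ hδadd hδmul dM) →ₗ[constants δ hδadd hδmul]
      (horizontalDual δ hδadd hδmul dN) →ₗ[constants δ hδadd hδmul]
      (horizontalDual δ hδadd hδmul d) :=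
    LinearMap.mk₂ (constants δ hδadd hδmul)
      (fun v w => ⟨phi (v : M →ₗ[K] K) (w : N →ₗ[K] K),
        phi_mem δ hδadd hδmul dM dN d hdadd hdtmul _ _ v.2 w.2⟩)
      (fun v v' w => Subtype.ext (TensorProduct.ext' fun a b => by
        simp [phi_tmul, add_mul]))
      (fun c v w => Subtype.ext (TensorProduct.ext' fun a b => by
        simp [phi_tmul, Subring.smul_def, smul_eq_mul, mul_assoc] <;> ring))
      (fun v w w' => Subtype.ext (TensorProduct.ext' fun a b => by
        simp [phi_tmul, mul_add]))
      (fun c v w => Subtype.ext (TensorProduct.ext' fun a b => by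
        simp [phi_tmul, Subring.smul_def, smul_eq_mul] <;> ring))
  let Φ := TensorProduct.lift Φbil
  have hΦt : ∀ v w, Φ (v ⊗ₜ w) = Φbil v w := fun v w => TensorProduct.lift.tmul v w
  have hΦtmul : ∀ (v : horizontalDual δ hδadd hδmul dM)
      (w : horizontalDual δ hδadd hδmul dN) (a : M) (b : N),
      (Φ (v ⊗ₜ w) : M ⊗[K] N →ₗ[K] K) (a ⊗ₜ[K] b)
        = (v : M →ₗ[K] K) a * (w : N →ₗ[K] K) b := by
    intro v w a b
    rw [hΦt]
    show phi (v : M →ₗ[K] K) (w : N →ₗ[K] K) (a ⊗ₜ[K] b) = _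
    rw [phi_tmul]
  -- behaviour on the product basis
  let bvw := bv.tensorProduct bw
  have hΦb : ∀ p, ((Φ (bvw p)) : (M ⊗[K] N) →ₗ[K] K) = B p := by
    intro p
    rw [show bvw p = bv p.1 ⊗ₜ bw p.2 from Basis.tensorProduct_apply' _ _ _, hΦt, hB]
    rfl
  -- linear independence of the image family
  have hind2 : LinearIndependent (constants δ hδadd hδmul) (fun p => Φ (bvw p)) := by
    apply LinearIndependent.of_comp (horizontalDual δ hδadd hδmul d).subtype
    have he : ((horizontalDual δ hδadd hδmul d).subtype ∘ fun p => Φ (bvw p))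
        = fun p => B p := funext fun p => hΦb p
    rw [he]
    refine B.linearIndependent.restrict_scalars ?_
    intro a b h
    simp only at h
    rw [Subfield.smul_def, Subfield.smul_def, smul_eq_mul, smul_eq_mul, mul_one, mul_one] at h
    exact Subtype.ext h
  -- injectivity
  have hinjective : Function.Injective Φ := by
    intro x y hxy
    apply bvw.repr.injective
    refine Finsupp.ext fun p => ?_
    have hrepx := bvw.sum_repr x
    have hrepy := bvw.sum_repr y
    refine linearIndependent_iff'ₛ.mp hind2 Finset.univ (fun q => bvw.repr x q)
      (fun q => bvw.repr y q) ?_ p (Finset.mem_univ p)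
    calc ∑ q, bvw.repr x q • Φ (bvw q) = Φ (∑ q, bvw.repr x q • bvw q) := by
          rw [map_sum]
          exact Finset.sum_congr rfl fun q _ => (map_smul Φ _ _).symm
      _ = Φ (∑ q, bvw.repr y q • bvw q) := by rw [hrepx, hrepy, hxy]
      _ = ∑ q, bvw.repr y q • Φ (bvw q) := by
          rw [map_sum]
          exact Finset.sum_congr rfl fun q _ => map_smul Φ _ _
  -- constancy of coefficients of a horizontal functional
  have hconst : ∀ f : (M ⊗[K] N) →ₗ[K] K, f ∈ horizontalDual δ hδadd hδmul d →
      ∀ p, δ (B.repr f p) = 0 := by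
    intro f hf
    have hrepr : ∑ p, B.repr f p • B p = f := B.sum_repr f
    have happ : ∀ t : M ⊗[K] N, f t = ∑ p, B.repr f p * (B p) t := by
      intro t
      conv_lhs => rw [← hrepr]
      simp only [LinearMap.sum_apply, LinearMap.smul_apply, smul_eq_mul]
    have hzero : ∑ p, δ (B.repr f p) • B p = 0 := by
      apply LinearMap.ext
      intro t
      have h2 := congrArg δ (happ t)
      rw [delta_sum δ hδadd] at h2
      have h3 : ∑ p, (B.repr f p * δ ((B p) t) + (B p) t * δ (B.repr f p)) = δ (f t) := by
        rw [h2]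
        exact Finset.sum_congr rfl fun p _ => (hδmul _ _).symm
      rw [Finset.sum_add_distrib] at h3
      have h4 : ∑ p, B.repr f p * δ ((B p) t) = f (d t) := by
        have e : ∑ p, B.repr f p * δ ((B p) t) = ∑ p, B.repr f p * (B p) (d t) :=
          Finset.sum_congr rfl fun p _ => by rw [hBmem p t]
        rw [e, ← happ (d t)]
      rw [h4, hf t] at h3
      have h5 : ∑ p, (B p) t * δ (B.repr f p) = 0 := by
        exact add_eq_left.mp h3
      simp only [LinearMap.sum_apply, LinearMap.smul_apply, smul_eq_mul, LinearMap.zero_apply]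
      rw [← h5]
      exact Finset.sum_congr rfl fun p _ => mul_comm _ _
    intro p
    exact linearIndependent_iff'.mp B.linearIndependent Finset.univ _ hzero p (Finset.mem_univ p)
  -- surjectivity
  have hsurjective : Function.Surjective Φ := by
    rintro ⟨f, hf⟩
    have hc := hconst f hf
    refine ⟨∑ p : Fin (finrank K M) × Fin (finrank K N),
      (⟨B.repr f p, hc p⟩ : constants δ hδadd hδmul) • (bv p.1 ⊗ₜ bw p.2), ?_⟩
    apply Subtype.ext
    have h1 : Φ (∑ p : Fin (finrank K M) × Fin (finrank K N),
        (⟨B.repr f p, hc p⟩ : constants δ hδadd hδmul) • (bv p.1 ⊗ₜ bw p.2))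
        = ∑ p, (⟨B.repr f p, hc p⟩ : constants δ hδadd hδmul) • Φ (bv p.1 ⊗ₜ bw p.2) := by
      rw [map_sum]
      exact Finset.sum_congr rfl fun p _ => map_smul Φ _ _
    rw [h1]
    have h2 : ((∑ p, (⟨B.repr f p, hc p⟩ : constants δ hδadd hδmul)
          • Φ (bv p.1 ⊗ₜ bw p.2) : horizontalDual δ hδadd hδmul d) : (M ⊗[K] N) →ₗ[K] K)
        = ∑ p, B.repr f p • (B p) := by
      rw [AddSubmonoidClass.coe_finset_sum]
      refine Finset.sum_congr rfl fun p _ => ?_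
      rw [SetLike.val_smul, Subring.smul_def]
      congr 1
      rw [← hΦb p]
      congr 1
      rw [show bvw p = bv p.1 ⊗ₜ bw p.2 from Basis.tensorProduct_apply' _ _ _]
    rw [h2, B.sum_repr f]
  constructor
  · exact ⟨Φ, hΦtmul, hinjective, hsurjective⟩
  -- the span statement
  apply le_antisymm
  · rw [Submodule.span_le]
    rintro f ⟨v, hv, w, hw, hfab⟩
    have hfv : f = phi v w := TensorProduct.ext' fun a b => by rw [hfab, phi_tmul]
    rw [SetLike.mem_coe, hfv]
    exact phi_mem δ hδadd hδmul dM dN d hdadd hdtmul _ _ hv hw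
  · intro f hf
    have hc := hconst f hf
    rw [← B.sum_repr f]
    apply Submodule.sum_mem
    intro p _
    have h1 : B.repr f p • B p
        = (⟨B.repr f p, hc p⟩ : constants δ hδadd hδmul) • B p := by
      rw [Subring.smul_def]
    rw [h1]
    apply Submodule.smul_mem
    apply Submodule.subset_span
    exact ⟨(bv p.1 : M →ₗ[K] K), (bv p.1).2, (bw p.2 : N →ₗ[K] K), (bw p.2).2,
      fun a b => by rw [hB, phi_tmul]⟩
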